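/- Fix a real N×d matrix X, x_test ∈ ℝ^d, ε ∈ ℝ^N, and λ > 0, and let μ_max be the largest eigenvalue of XᵀX. Then the map G : ℝ^d → ℝ, G(β) = x_testᵀ(XᵀX + λI_d)⁻¹Xᵀ(Xβ + ε), is Lipschitz continuous with Lipschitz constant L = ‖x_test‖ · μ_max/(μ_max + λ) with respect to the Euclidean norm on ℝ^d. -/

import Mathlib

open Matrix
open scoped Classical

/-- Largest eigenvalue of a (Hermitian) real square matrix; junk value `0` if the
matrix is not Hermitian or the dimension is zero. -/
noncomputable def maxEig {d : ℕ} (A : Matrix (Fin d) (Fin d) ℝ) : ℝ :=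
  if h : A.IsHermitian ∧ 0 < d then
    Finset.univ.sup' ⟨⟨0, h.2⟩, Finset.mem_univ _⟩ h.1.eigenvalues
  else 0

/-- The ridge-regression prediction at `x_test`, as a function of the true task
parameter `β` generating the labels `y = Xβ + ε`. -/
noncomputable def ridgePrediction {N d : ℕ} (X : Matrix (Fin N) (Fin d) ℝ)
    (xtest : Fin d → ℝ) (ε : Fin N → ℝ) (lam : ℝ) (β : Fin d → ℝ) : ℝ :=
  xtest ⬝ᵥ ((Xᵀ * X + lam • (1 : Matrix (Fin d) (Fin d) ℝ))⁻¹ *ᵥ (Xᵀ *ᵥ (X *ᵥ β + ε)))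

/-- **Lipschitz continuity of the in-context ridge predictor.** The map
`G(β) = x_testᵀ (XᵀX + λI_d)⁻¹ Xᵀ (Xβ + ε)` is Lipschitz with constant
`L = ‖x_test‖ · μ_max/(μ_max + λ)` with respect to the Euclidean norm on `ℝ^d`,
where `μ_max` is the largest eigenvalue of `XᵀX`. -/
theorem ridgePrediction_lipschitz {N d : ℕ} (hN : 0 < N) (hd : 0 < d)
    (X : Matrix (Fin N) (Fin d) ℝ) (xtest : Fin d → ℝ) (ε : Fin N → ℝ)
    (lam : ℝ) (hlam : 0 < lam) :
    ∀ β β' : Fin d → ℝ,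
      |ridgePrediction X xtest ε lam β - ridgePrediction X xtest ε lam β'| ≤
        (Real.sqrt (∑ j, (xtest j) ^ 2) * (maxEig (Xᵀ * X) / (maxEig (Xᵀ * X) + lam))) *
          Real.sqrt (∑ j, (β j - β' j) ^ 2) := by
  intro β β'
  have hA : (Xᵀ * X).IsHermitian := by
    have h := Matrix.isHermitian_conjTranspose_mul_self X
    rwa [Matrix.conjTranspose_eq_transpose_of_trivial] at h
  have hPSD : (Xᵀ * X).PosSemidef := by
    have h := Matrix.posSemidef_conjTranspose_mul_self X
    rwa [Matrix.conjTranspose_eq_transpose_of_trivial] at h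
  set A := Xᵀ * X with hAdef
  set M := A + lam • (1 : Matrix (Fin d) (Fin d) ℝ) with hMdef
  have hM : M.PosDef := Matrix.PosDef.posSemidef_add hPSD (by
    rw [smul_one_eq_diagonal]; exact Matrix.posDef_diagonal_iff.mpr fun _ => hlam)
  have hdet : IsUnit M.det := hM.det_pos.ne'.isUnit
  have hMinv : M⁻¹ * M = 1 := Matrix.nonsing_inv_mul M hdet
  set μ := hA.eigenvalues with hμdef
  have hμ0 : ∀ i, 0 ≤ μ i := hPSD.eigenvalues_nonneg
  set b := hA.eigenvectorBasis with hbdef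
  have hmax : maxEig A = Finset.univ.sup' ⟨⟨0, hd⟩, Finset.mem_univ _⟩ μ := by
    rw [maxEig, dif_pos (⟨hA, hd⟩ : A.IsHermitian ∧ 0 < d)]
  set m := maxEig A with hmdef
  have hμle : ∀ i, μ i ≤ m := fun i => hmax ▸ Finset.le_sup' μ (Finset.mem_univ i)
  have hm0 : 0 ≤ m := le_trans (hμ0 ⟨0, hd⟩) (hμle ⟨0, hd⟩)
  have hmlam : 0 < m + lam := by linarith
  have hμlam : ∀ i, 0 < μ i + lam := fun i => by have := hμ0 i; linarith
  set R : ℝ := m / (m + lam) with hRdef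
  have hR0 : 0 ≤ R := div_nonneg hm0 hmlam.le
  have hratio : ∀ i, μ i / (μ i + lam) ≤ R := fun i => by
    rw [hRdef, div_le_div_iff₀ (hμlam i) hmlam]
    nlinarith [hμ0 i, hμle i]
  have hratio0 : ∀ i, 0 ≤ μ i / (μ i + lam) := fun i => div_nonneg (hμ0 i) (hμlam i).le
  -- eigenvector identities
  have key2 : ∀ i, M⁻¹ *ᵥ ⇑(b i) = (μ i + lam)⁻¹ • ⇑(b i) := by
    intro i
    have k1 : M *ᵥ ⇑(b i) = (μ i + lam) • ⇑(b i) := by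
      rw [hMdef, Matrix.add_mulVec, Matrix.smul_mulVec, Matrix.one_mulVec,
        hA.mulVec_eigenvectorBasis, add_smul]
    have h2 : M⁻¹ *ᵥ (M *ᵥ ⇑(b i)) = ⇑(b i) := by
      rw [Matrix.mulVec_mulVec, hMinv, Matrix.one_mulVec]
    rw [k1, Matrix.mulVec_smul] at h2
    calc M⁻¹ *ᵥ ⇑(b i) = (μ i + lam)⁻¹ • ((μ i + lam) • (M⁻¹ *ᵥ ⇑(b i))) := by
          rw [smul_smul, inv_mul_cancel₀ (hμlam i).ne', one_smul]
      _ = (μ i + lam)⁻¹ • ⇑(b i) := by rw [h2]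
  have key3 : ∀ i, M⁻¹ *ᵥ (A *ᵥ ⇑(b i)) = (μ i / (μ i + lam)) • ⇑(b i) := by
    intro i
    rw [hA.mulVec_eigenvectorBasis, Matrix.mulVec_smul, key2, smul_smul, div_eq_mul_inv]
  -- the difference
  set v : Fin d → ℝ := β - β' with hvdef
  have hdiff : ridgePrediction X xtest ε lam β - ridgePrediction X xtest ε lam β'
      = xtest ⬝ᵥ (M⁻¹ *ᵥ (A *ᵥ v)) := by
    have h1 : Xᵀ *ᵥ (X *ᵥ β + ε) - Xᵀ *ᵥ (X *ᵥ β' + ε) = A *ᵥ v := by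
      rw [← Matrix.mulVec_sub, add_sub_add_right_eq_sub, ← Matrix.mulVec_sub,
        Matrix.mulVec_mulVec]
    rw [ridgePrediction, ridgePrediction, ← dotProduct_sub, ← Matrix.mulVec_sub, h1]
  -- expand v in eigenbasis
  set V : EuclideanSpace ℝ (Fin d) := (WithLp.equiv 2 (Fin d → ℝ)).symm v with hVdef
  set c : Fin d → ℝ := fun i => b.repr V i with hcdef
  have hVsum : V = ∑ i, c i • b i := by
    rw [hcdef]; exact (b.sum_repr V).symm
  have hvsum : v = ∑ i, c i • ⇑(b i) := by
    have h := congrArg WithLp.ofLp hVsum; rw [WithLp.ofLp_sum] at h; exact h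
  have mulVec_sum : ∀ (B : Matrix (Fin d) (Fin d) ℝ) (f : Fin d → Fin d → ℝ) (a : Fin d → ℝ),
      B *ᵥ (∑ i, a i • f i) = ∑ i, a i • (B *ᵥ f i) := by
    intro B f a
    show B.mulVecLin _ = _
    rw [map_sum]
    simp [Matrix.mulVecLin_apply]
  have hw : M⁻¹ *ᵥ (A *ᵥ v) = ∑ i, (c i * (μ i / (μ i + lam))) • ⇑(b i) := by
    rw [hvsum, mulVec_sum, mulVec_sum]
    refine Finset.sum_congr rfl fun i _ => ?_
    rw [key3 i, smul_smul]
  set W : EuclideanSpace ℝ (Fin d) := (WithLp.equiv 2 (Fin d → ℝ)).symm (M⁻¹ *ᵥ (A *ᵥ v))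
    with hWdef
  have hWsum : W = ∑ i, (c i * (μ i / (μ i + lam))) • b i := by
    have h := congrArg (WithLp.toLp 2) hw; rw [WithLp.toLp_sum] at h; exact h
  -- norms
  have normW : ‖W‖ ^ 2 = ∑ i, (c i * (μ i / (μ i + lam))) ^ 2 := by
    have h1 : ∀ i, b.repr W i = c i * (μ i / (μ i + lam)) := by
      intro i
      rw [b.repr_apply_apply, hWsum]
      exact b.orthonormal.inner_right_fintype _ i
    rw [← b.repr.norm_map W, EuclideanSpace.norm_eq, Real.sq_sqrt (by positivity)]
    exact Finset.sum_congr rfl fun i _ => by rw [h1 i, Real.norm_eq_abs, sq_abs]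
  have normV : ‖V‖ ^ 2 = ∑ i, (c i) ^ 2 := by
    rw [← b.repr.norm_map V, EuclideanSpace.norm_eq, Real.sq_sqrt (by positivity)]
    exact Finset.sum_congr rfl fun i _ => by rw [hcdef, Real.norm_eq_abs, sq_abs]
  have hWV : ‖W‖ ≤ R * ‖V‖ := by
    have hsq : ‖W‖ ^ 2 ≤ (R * ‖V‖) ^ 2 := by
      rw [normW, mul_pow, normV, Finset.mul_sum]
      refine Finset.sum_le_sum fun i _ => ?_
      rw [mul_pow]
      have : (μ i / (μ i + lam)) ^ 2 ≤ R ^ 2 :=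
        pow_le_pow_left₀ (hratio0 i) (hratio i) 2
      nlinarith [sq_nonneg (c i)]
    have := Real.sqrt_le_sqrt hsq
    rwa [Real.sqrt_sq (norm_nonneg _), Real.sqrt_sq (by positivity)] at this
  -- Cauchy-Schwarz
  set xt : EuclideanSpace ℝ (Fin d) := (WithLp.equiv 2 (Fin d → ℝ)).symm xtest with hxtdef
  have hCS : |xtest ⬝ᵥ (M⁻¹ *ᵥ (A *ᵥ v))| ≤ ‖xt‖ * ‖W‖ := by
    have h1 : xtest ⬝ᵥ (M⁻¹ *ᵥ (A *ᵥ v)) = (inner ℝ xt W : ℝ) := by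
      rw [PiLp.inner_apply]
      simp [dotProduct, RCLike.inner_apply, hxtdef, hWdef, mul_comm]
    rw [h1]
    exact abs_real_inner_le_norm xt W
  have hnormxt : ‖xt‖ = Real.sqrt (∑ j, (xtest j) ^ 2) := by
    rw [EuclideanSpace.norm_eq]
    simp [hxtdef, Real.norm_eq_abs, sq_abs]
  have hnormV : ‖V‖ = Real.sqrt (∑ j, (β j - β' j) ^ 2) := by
    rw [EuclideanSpace.norm_eq]
    simp [hVdef, hvdef, Real.norm_eq_abs, sq_abs]
  rw [hdiff]
  calc |xtest ⬝ᵥ (M⁻¹ *ᵥ (A *ᵥ v))| ≤ ‖xt‖ * ‖W‖ := hCS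
    _ ≤ ‖xt‖ * (R * ‖V‖) := by
        exact mul_le_mul_of_nonneg_left hWV (norm_nonneg _)
    _ = (Real.sqrt (∑ j, (xtest j) ^ 2) * R) * Real.sqrt (∑ j, (β j - β' j) ^ 2) := by
        rw [hnormxt, hnormV]; ring
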